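/- Let η : (ℝ^d)^n → ℝ^m be anti-symmetric and continuously differentiable. If x = (x_1,...,x_n) satisfies x_{i_1} = x_{i_2} for some i_1 ≠ i_2, then the Jacobian matrix Jη(x) ∈ ℝ^{m×nd} does not have full column rank; in fact, ∂η/∂x_{i_1,j}(x) = -∂η/∂x_{i_2,j}(x) for each j ∈ {1,...,d}. -/

import Mathlib

/-- At a configuration with `x_{i₁} = x_{i₂}` (`i₁ ≠ i₂`), the Jacobian of an anti-symmetric
`C¹` map `η` has opposite partial derivatives in the `(i₁,j)` and `(i₂,j)` coordinates, and in
particular it does not have full column rank. -/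
theorem jacobian_rank_deficient_on_singular {d n m : ℕ} (hd : 0 < d)
    (η : (Fin n → (Fin d → ℝ)) → (Fin m → ℝ))
    (hηsm : ContDiff ℝ 1 η)
    (hηa : ∀ (σ : Equiv.Perm (Fin n)) (x : Fin n → (Fin d → ℝ)),
      η (x ∘ σ) = ((Equiv.Perm.sign σ : ℤ) : ℝ) • η x)
    (x : Fin n → (Fin d → ℝ)) (i₁ i₂ : Fin n) (h12 : i₁ ≠ i₂) (hx : x i₁ = x i₂) :
    (∀ j : Fin d,
      fderiv ℝ η x (Function.update (0 : Fin n → (Fin d → ℝ)) i₁ (Pi.single j 1))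
        = -fderiv ℝ η x (Function.update (0 : Fin n → (Fin d → ℝ)) i₂ (Pi.single j 1))) ∧
    ¬Function.Injective ⇑(fderiv ℝ η x) := by
  classical
  set σ : Equiv.Perm (Fin n) := Equiv.swap i₁ i₂ with hσ
  set L : (Fin n → Fin d → ℝ) →L[ℝ] (Fin n → Fin d → ℝ) :=
    ContinuousLinearMap.pi (fun i => ContinuousLinearMap.proj (σ i)) with hLdef
  have hLapp : ∀ (v : Fin n → Fin d → ℝ), L v = v ∘ σ := fun v => rfl
  have hsign : ((Equiv.Perm.sign σ : ℤ) : ℝ) = -1 := by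
    simp [hσ, Equiv.Perm.sign_swap h12]
  have hcomp : ∀ v : Fin n → Fin d → ℝ, η (L v) = -η v := by
    intro v
    rw [hLapp, hηa σ v, hsign, neg_one_smul]
  have hLx : L x = x := by
    funext i
    show x (σ i) = x i
    rcases eq_or_ne i i₁ with rfl | h1
    · simp [hσ, hx]
    rcases eq_or_ne i i₂ with rfl | h2
    · simp [hσ, hx.symm]
    · simp [hσ, Equiv.swap_apply_of_ne_of_ne h1 h2]
  have hdiff := hηsm.differentiable one_ne_zero
  have h1 : fderiv ℝ (fun y => η (L y)) x = (fderiv ℝ η x).comp L := by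
    have := fderiv_comp (𝕜 := ℝ) x (hdiff (L x)) L.differentiableAt
    rw [L.fderiv] at this
    simpa [Function.comp_def, hLx] using this
  have h2 : fderiv ℝ (fun y => η (L y)) x = - fderiv ℝ η x := by
    have heq : (fun y => η (L y)) = fun y => -η y := funext hcomp
    rw [heq, fderiv_fun_neg]
  have key : ∀ v, fderiv ℝ η x (L v) = - fderiv ℝ η x v := by
    intro v
    have h3 : (fderiv ℝ η x).comp L = - fderiv ℝ η x := h1.symm.trans h2
    have := DFunLike.congr_fun h3 v
    simpa using this
  have hupd : ∀ j : Fin d,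
      L (Function.update (0 : Fin n → (Fin d → ℝ)) i₁ (Pi.single j 1))
        = Function.update (0 : Fin n → (Fin d → ℝ)) i₂ (Pi.single j 1) := by
    intro j
    funext i
    show Function.update (0 : Fin n → (Fin d → ℝ)) i₁ (Pi.single j 1) (σ i)
      = Function.update (0 : Fin n → (Fin d → ℝ)) i₂ (Pi.single j 1) i
    rcases eq_or_ne i i₂ with rfl | h
    · rw [hσ, Equiv.swap_apply_right, Function.update_self, Function.update_self]
    · have hne : σ i ≠ i₁ := fun hc =>
        h (σ.injective (hc.trans (Equiv.swap_apply_right i₁ i₂).symm))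
      simp [Function.update_of_ne hne, Function.update_of_ne h]
  have part1 : ∀ j : Fin d,
      fderiv ℝ η x (Function.update (0 : Fin n → (Fin d → ℝ)) i₁ (Pi.single j 1))
        = -fderiv ℝ η x (Function.update (0 : Fin n → (Fin d → ℝ)) i₂ (Pi.single j 1)) := by
    intro j
    have := key (Function.update (0 : Fin n → (Fin d → ℝ)) i₁ (Pi.single j 1))
    rw [hupd j] at this
    rw [this, neg_neg]
  refine ⟨part1, ?_⟩
  intro hinj
  set j0 : Fin d := ⟨0, hd⟩
  have h4 : fderiv ℝ η x (Function.update (0 : Fin n → (Fin d → ℝ)) i₁ (Pi.single j0 1))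
      = fderiv ℝ η x (-(Function.update (0 : Fin n → (Fin d → ℝ)) i₂ (Pi.single j0 1))) := by
    rw [part1 j0, map_neg]
  have h5 := hinj h4
  have h6 := congrFun h5 i₁
  have h7 : (Function.update (0 : Fin n → (Fin d → ℝ)) i₁ (Pi.single j0 1)) i₁
      = Pi.single j0 1 := by simp
  have h8 : (-(Function.update (0 : Fin n → (Fin d → ℝ)) i₂ (Pi.single j0 1))) i₁
      = 0 := by simp [Function.update_of_ne h12]
  rw [h7, h8] at h6
  have := congrFun h6 j0
  simp at this
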